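/- arXiv:2404.08079 — 3 statements merged into one kernel-verified Lean document; each statement's English description precedes it below -/
import Mathlib

section
/- Let A be a real symmetric doubly stochastic m×m matrix and P an m×m permutation matrix such that AP is symmetric. Then AP is doubly stochastic, and writing the eigenvalues of a symmetric matrix M in decreasing order λ₁(M) ≥ ⋯ ≥ λ_m(M), one has max{|λ₂(AP)|, |λ_m(AP)|} ≤ max{|λ₂(A)|, |λ_m(A)|}. (In words: the spectral-gap parameter √ρ' of the merged matrix AP is no larger than the spectral-gap parameter √ρ of A.) -/
open Matrix Polynomial


section Aux

variable {n : Type*} [Fintype n] [DecidableEq n]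

private lemma my_charpoly_conj (M U V : Matrix n n ℝ) (hUV : U * V = 1) :
    (U * M * V).charpoly = M.charpoly := by
  set Cm := (C : ℝ →+* ℝ[X]).mapMatrix (m := n) with hCm
  have hm1 : Cm U * Cm V = 1 := by rw [← _root_.map_mul, hUV, _root_.map_one]
  have hchar : charmatrix (U * M * V) = Cm U * charmatrix M * Cm V := by
    rw [charmatrix, charmatrix, Matrix.mul_sub, Matrix.sub_mul]
    congr 1
    · symm
      calc Cm U * Matrix.scalar n (X : ℝ[X]) * Cm V
          = Matrix.scalar n (X : ℝ[X]) * (Cm U * Cm V) := by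
            rw [← (Matrix.scalar_commute (X : ℝ[X]) (Commute.all _) (Cm U)).eq,
              Matrix.mul_assoc]
      _ = Matrix.scalar n (X : ℝ[X]) := by rw [hm1, Matrix.mul_one]
    · rw [_root_.map_mul, _root_.map_mul]
  have hdet : (Cm U).det * (Cm V).det = 1 := by rw [← Matrix.det_mul, hm1, Matrix.det_one]
  rw [Matrix.charpoly, Matrix.charpoly, hchar, Matrix.det_mul, Matrix.det_mul,
    mul_right_comm, hdet, one_mul]

variable {m : ℕ}

private lemma my_charpoly_diag (d : Fin m → ℝ) :
    (Matrix.diagonal d).charpoly = ∏ i, (X - C (d i)) := by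
  rw [Matrix.charpoly_of_upperTriangular _ (Matrix.blockTriangular_diagonal d)]
  simp

private lemma my_charpoly_herm (M : Matrix (Fin m) (Fin m) ℝ) (hM : M.IsHermitian) :
    M.charpoly = ∏ i, (X - C (hM.eigenvalues i)) := by
  have hU : (hM.eigenvectorUnitary : Matrix (Fin m) (Fin m) ℝ) *
      star (hM.eigenvectorUnitary : Matrix (Fin m) (Fin m) ℝ) = 1 :=
    (Matrix.mem_unitaryGroup_iff).mp hM.eigenvectorUnitary.2
  conv_lhs => rw [hM.spectral_theorem, Unitary.conjStarAlgAut_apply]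
  rw [my_charpoly_conj _ _ _ hU]
  rw [show (RCLike.ofReal ∘ hM.eigenvalues : Fin m → ℝ) = hM.eigenvalues by
    funext i; simp]
  exact my_charpoly_diag _

private lemma my_charpoly_sq_herm (M : Matrix (Fin m) (Fin m) ℝ) (hM : M.IsHermitian) :
    (M * M).charpoly = ∏ i, (X - C (hM.eigenvalues i ^ 2)) := by
  set U := (hM.eigenvectorUnitary : Matrix (Fin m) (Fin m) ℝ) with hUdef
  have hU : U * star U = 1 := (Matrix.mem_unitaryGroup_iff).mp hM.eigenvectorUnitary.2
  have hU' : star U * U = 1 := (Matrix.mem_unitaryGroup_iff').mp hM.eigenvectorUnitary.2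
  set D := Matrix.diagonal (RCLike.ofReal ∘ hM.eigenvalues : Fin m → ℝ) with hDdef
  have hsq : M * M = U * (D * D) * star U := by
    conv_lhs => rw [hM.spectral_theorem, Unitary.conjStarAlgAut_apply]
    simp only [Matrix.mul_assoc, ← hUdef, ← hDdef]
    rw [← Matrix.mul_assoc (star U) U, hU', Matrix.one_mul]
  rw [hsq, my_charpoly_conj _ _ _ hU, hDdef, Matrix.diagonal_mul_diagonal]
  rw [show (fun i => (RCLike.ofReal ∘ hM.eigenvalues : Fin m → ℝ) i *
        (RCLike.ofReal ∘ hM.eigenvalues : Fin m → ℝ) i)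
      = fun i => hM.eigenvalues i ^ 2 by funext i; simp [sq]]
  exact my_charpoly_diag _

private lemma my_roots_prod (f : Fin m → ℝ) :
    (∏ l, (X - C (f l))).roots = Multiset.map f Finset.univ.val := by
  have h : ∏ l, (X - C (f l))
      = ((Multiset.map f Finset.univ.val).map (fun a => X - C a)).prod := by
    rw [Multiset.map_map]
    rfl
  rw [h, roots_multiset_prod_X_sub_C]

end Aux


variable {m : ℕ}

private lemma my_hasEigen (M : Matrix (Fin m) (Fin m) ℝ) (hM : M.IsHermitian) (i : Fin m) :
    Module.End.HasEigenvalue (Matrix.toLin' M) (hM.eigenvalues i) := by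
  apply Module.End.hasEigenvalue_of_hasEigenvector (x := ⇑(hM.eigenvectorBasis i))
  constructor
  · rw [Module.End.mem_eigenspace_iff, Matrix.toLin'_apply, hM.mulVec_eigenvectorBasis]
  · intro h
    apply hM.eigenvectorBasis.toBasis.ne_zero i
    rw [OrthonormalBasis.coe_toBasis]
    ext j
    exact congrFun h j

private lemma my_eig_bound (M : Matrix (Fin m) (Fin m) ℝ)
    (hMds : M ∈ doublyStochastic ℝ (Fin m)) (hM : M.IsHermitian) (i : Fin m) :
    |hM.eigenvalues i| ≤ 1 := by
  obtain ⟨k, hk⟩ := eigenvalue_mem_ball (my_hasEigen M hM i)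
  rw [Metric.mem_closedBall, Real.dist_eq] at hk
  have hsum : ∑ j ∈ Finset.univ.erase k, ‖M k j‖ = 1 - M k k := by
    rw [Finset.sum_congr rfl
      (fun j _ => Real.norm_of_nonneg (nonneg_of_mem_doublyStochastic hMds)),
      Finset.sum_erase_eq_sub (Finset.mem_univ k),
      sum_row_of_mem_doublyStochastic hMds k]
  rw [hsum] at hk
  have h0 : 0 ≤ M k k := nonneg_of_mem_doublyStochastic hMds
  have := abs_le.mp hk
  rw [abs_le]
  constructor <;> linarith [this.1, this.2]

private lemma my_one_root (hm : 0 < m) (M : Matrix (Fin m) (Fin m) ℝ)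
    (hMds : M ∈ doublyStochastic ℝ (Fin m)) :
    (1 : ℝ) ∈ M.charpoly.roots := by
  rw [Polynomial.mem_roots (M.charpoly_monic.ne_zero)]
  have heval : M.charpoly.eval 1 = ((1 : Matrix (Fin m) (Fin m) ℝ) - M).det := by
    rw [Matrix.charpoly, ← Polynomial.coe_evalRingHom, RingHom.map_det]
    congr 1
    ext i j
    by_cases h : i = j <;>
      simp [charmatrix_apply, h, Matrix.one_apply, Matrix.diagonal_apply]
  have hdet : ((1 : Matrix (Fin m) (Fin m) ℝ) - M).det = 0 := by
    rw [← Matrix.exists_mulVec_eq_zero_iff]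
    refine ⟨1, ?_, ?_⟩
    · intro h
      simpa using congrFun h ⟨0, hm⟩
    · rw [Matrix.sub_mulVec, Matrix.one_mulVec,
        mulVec_one_of_mem_doublyStochastic hMds, sub_self]
  show M.charpoly.IsRoot 1
  rw [Polynomial.IsRoot.def, heval, hdet]


/-- Let `A` be a real symmetric doubly stochastic `m×m` matrix and `P`
a permutation matrix such that `A * P` is symmetric. Then `A * P` is doubly stochastic,
and — writing the eigenvalues of `A * P` (resp. `A`) in decreasing order as the antitone
enumerations `μ` (resp. `ν`) of the roots of the characteristic polynomial —
`max {|λ₂(AP)|, |λ_m(AP)|} ≤ max {|λ₂(A)|, |λ_m(A)|}`. -/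
theorem perm_mul_doublyStochastic_spectral_gap
    {m : ℕ} (hm : 2 ≤ m) (A P : Matrix (Fin m) (Fin m) ℝ)
    (hA : A.IsSymm) (hAds : A ∈ doublyStochastic ℝ (Fin m))
    (hP : ∃ σ : Equiv.Perm (Fin m), P = σ.permMatrix ℝ)
    (hAP : (A * P).IsSymm)
    (μ ν : Fin m → ℝ) (hμmono : Antitone μ) (hνmono : Antitone ν)
    (hcharAP : (A * P).charpoly = ∏ l, (X - C (μ l)))
    (hcharA : A.charpoly = ∏ l, (X - C (ν l))) :
    (A * P) ∈ doublyStochastic ℝ (Fin m) ∧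
    max |μ ⟨1, by omega⟩| |μ ⟨m - 1, by omega⟩| ≤
      max |ν ⟨1, by omega⟩| |ν ⟨m - 1, by omega⟩| := by
  classical
  obtain ⟨σ, rfl⟩ := hP
  set P : Matrix (Fin m) (Fin m) ℝ := σ.permMatrix ℝ with hPdef
  have hPds : P ∈ doublyStochastic ℝ (Fin m) := permMatrix_mem_doublyStochastic
  have hAPds : A * P ∈ doublyStochastic ℝ (Fin m) := mul_mem hAds hPds
  refine ⟨hAPds, ?_⟩
  have hAh : A.IsHermitian := by
    rw [Matrix.IsHermitian, Matrix.conjTranspose_eq_transpose_of_trivial]; exact hA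
  have hAPh : (A * P).IsHermitian := by
    rw [Matrix.IsHermitian, Matrix.conjTranspose_eq_transpose_of_trivial]; exact hAP
  have hPPT : P * Pᵀ = 1 := by
    rw [hPdef, Equiv.Perm.permMatrix, ← PEquiv.toMatrix_symm, ← Equiv.toPEquiv_symm,
      ← PEquiv.toMatrix_trans, ← Equiv.toPEquiv_trans]
    simp
  have hsym : Pᵀ * A = A * P := by
    have h := hAP.eq
    rw [Matrix.transpose_mul, hA.eq] at h
    exact h
  have h1 : P * (A * P) = A := by
    rw [← hsym, ← Matrix.mul_assoc, hPPT, Matrix.one_mul]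
  have hsq : (A * P) * (A * P) = A * A := by
    rw [Matrix.mul_assoc, h1]
  set u : Multiset (Fin m) := Finset.univ.val with hu
  have r1 : Multiset.map μ u = Multiset.map hAPh.eigenvalues u := by
    have h := congrArg Polynomial.roots (hcharAP.symm.trans (my_charpoly_herm _ hAPh))
    rwa [my_roots_prod, my_roots_prod] at h
  have r2 : Multiset.map ν u = Multiset.map hAh.eigenvalues u := by
    have h := congrArg Polynomial.roots (hcharA.symm.trans (my_charpoly_herm _ hAh))
    rwa [my_roots_prod, my_roots_prod] at h
  have rsq : Multiset.map (fun i => hAPh.eigenvalues i ^ 2) u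
      = Multiset.map (fun i => hAh.eigenvalues i ^ 2) u := by
    have h := (my_charpoly_sq_herm _ hAPh).symm.trans
      ((congrArg Matrix.charpoly hsq).trans (my_charpoly_sq_herm _ hAh))
    have h2 := congrArg Polynomial.roots h
    rwa [my_roots_prod, my_roots_prod] at h2
  have hsq2 : Multiset.map (fun l => μ l ^ 2) u = Multiset.map (fun l => ν l ^ 2) u := by
    calc Multiset.map (fun l => μ l ^ 2) u
        = Multiset.map (fun x => x ^ 2) (Multiset.map μ u) := by rw [Multiset.map_map]; rfl
      _ = Multiset.map (fun x => x ^ 2) (Multiset.map hAPh.eigenvalues u) := by rw [r1]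
      _ = Multiset.map (fun i => hAPh.eigenvalues i ^ 2) u := by rw [Multiset.map_map]; rfl
      _ = Multiset.map (fun i => hAh.eigenvalues i ^ 2) u := rsq
      _ = Multiset.map (fun x => x ^ 2) (Multiset.map hAh.eigenvalues u) := by
            rw [Multiset.map_map]; rfl
      _ = Multiset.map (fun x => x ^ 2) (Multiset.map ν u) := by rw [r2]
      _ = Multiset.map (fun l => ν l ^ 2) u := by rw [Multiset.map_map]; rfl
  have habs : Multiset.map (fun l => |μ l|) u = Multiset.map (fun l => |ν l|) u := by
    have key : ∀ f : Fin m → ℝ, Multiset.map (fun l => |f l|) u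
        = Multiset.map Real.sqrt (Multiset.map (fun l => f l ^ 2) u) := by
      intro f
      rw [Multiset.map_map]
      exact Multiset.map_congr rfl fun x _ => (Real.sqrt_sq_eq_abs _).symm
    rw [key μ, key ν, hsq2]
  have hbndμ : ∀ i, |μ i| ≤ 1 := by
    intro i
    have hmem : μ i ∈ Multiset.map hAPh.eigenvalues u := by
      rw [← r1]; exact Multiset.mem_map_of_mem _ (Finset.mem_univ i)
    obtain ⟨j, _, hj⟩ := Multiset.mem_map.mp hmem
    rw [← hj]
    exact my_eig_bound _ hAPds hAPh j
  have h0m : 0 < m := by omega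
  have hμ0 : μ ⟨0, h0m⟩ = 1 := by
    have h1r : (1 : ℝ) ∈ Multiset.map μ u := by
      have h := my_one_root h0m (A * P) hAPds
      rwa [hcharAP, my_roots_prod] at h
    obtain ⟨j, _, hj⟩ := Multiset.mem_map.mp h1r
    have hle : μ ⟨0, h0m⟩ ≤ 1 := le_trans (le_abs_self _) (hbndμ _)
    have hge : (1 : ℝ) ≤ μ ⟨0, h0m⟩ := by
      rw [← hj]
      exact hμmono (show (⟨0, h0m⟩ : Fin m) ≤ j by rw [Fin.le_def]; exact Nat.zero_le _)
    linarith
  set i1 : Fin m := ⟨1, by omega⟩ with hi1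
  set im : Fin m := ⟨m - 1, by omega⟩ with him
  set t : ℝ := max |ν i1| |ν im| with ht
  have hνt : ∀ j : Fin m, j ≠ ⟨0, h0m⟩ → |ν j| ≤ t := by
    intro j hj
    have hjval : j.val ≠ 0 := fun h => hj (Fin.ext h)
    have hj1 : i1 ≤ j := by rw [Fin.le_def]; simp only [hi1]; omega
    have hjm : j ≤ im := by
      rw [Fin.le_def]; simp only [him]
      have := j.isLt; omega
    have hub : ν j ≤ t := le_trans (le_trans (hνmono hj1) (le_abs_self _)) (le_max_left _ _)
    have hlb : -t ≤ ν j := by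
      have h2 := hνmono hjm
      have h3 : -|ν im| ≤ ν im := neg_abs_le _
      have h4 : |ν im| ≤ t := le_max_right _ _
      linarith
    rw [abs_le]; exact ⟨hlb, hub⟩
  have keymax : ∀ j : Fin m, j ≠ ⟨0, h0m⟩ → |μ j| ≤ t := by
    intro j hj
    by_contra hlt
    push_neg at hlt
    have h0t : t < |μ ⟨0, h0m⟩| := by
      rw [hμ0, abs_one]
      exact lt_of_lt_of_le hlt (hbndμ j)
    have hc1 : 2 ≤ Multiset.countP (fun x => t < x) (Multiset.map (fun l => |μ l|) u) := by
      rw [Multiset.countP_map]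
      have hsub : ({⟨0, h0m⟩, j} : Finset (Fin m))
          ⊆ Finset.univ.filter (fun a => t < |μ a|) := by
        intro x hx
        rcases Finset.mem_insert.mp hx with h | h
        · subst h; exact Finset.mem_filter.mpr ⟨Finset.mem_univ _, h0t⟩
        · rw [Finset.mem_singleton] at h; subst h
          exact Finset.mem_filter.mpr ⟨Finset.mem_univ _, hlt⟩
      have hcard := Finset.card_le_card hsub
      rw [Finset.card_pair (by exact hj ∘ Eq.symm : (⟨0, h0m⟩ : Fin m) ≠ j)] at hcard
      exact hcard
    have hc2 : Multiset.countP (fun x => t < x) (Multiset.map (fun l => |ν l|) u) ≤ 1 := by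
      rw [Multiset.countP_map]
      have hsub : Finset.univ.filter (fun a => t < |ν a|) ⊆ {(⟨0, h0m⟩ : Fin m)} := by
        intro x hx
        rw [Finset.mem_singleton]
        by_contra hne
        exact absurd (hνt x hne) (not_le.mpr (Finset.mem_filter.mp hx).2)
      have h := Finset.card_le_card hsub
      rwa [Finset.card_singleton] at h
    rw [habs] at hc1
    omega
  exact max_le (keymax i1 (by simp [hi1, Fin.ext_iff]))
    (keymax im (by simp [him, Fin.ext_iff]; omega))
end

section
/- Let 0 ≤ β < 1 and α ∈ ℝ, and let (x̄_k)_{k≥0}, (v̄_k)_{k≥0}, (ḡ_k)_{k≥0} be sequences in ℝ^d satisfying v̄_0 = 0, v̄_{k+1} = β·v̄_k − α·ḡ_k and x̄_{k+1} = x̄_k + v̄_{k+1} for all k ≥ 0. Define p̄_0 = x̄_0 and p̄_k = (1/(1−β))·x̄_k − (β/(1−β))·x̄_{k−1} for k ≥ 1. Then for every K ≥ 1: ∑_{k=1}^K ‖p̄_k − x̄_k‖² ≤ (α²β²/(1−β)⁴)·∑_{k=0}^{K−1} ‖ḡ_k‖². -/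
/-- For the agent-averaged DIMAT-MSGD recursions
`v̄₀ = 0`, `v̄_{k+1} = β v̄_k − α ḡ_k`, `x̄_{k+1} = x̄_k + v̄_{k+1}` with `0 ≤ β < 1`, and
`p̄₀ = x̄₀`, `p̄_k = (1/(1−β)) x̄_k − (β/(1−β)) x̄_{k−1}` (`k ≥ 1`), one has
`∑_{k=1}^K ‖p̄_k − x̄_k‖² ≤ (α²β²/(1−β)⁴) ∑_{k=0}^{K−1} ‖ḡ_k‖²` for every `K ≥ 1`. -/
theorem msgd_auxiliary_distance_bound
    {d : ℕ} (β α : ℝ) (hβ0 : 0 ≤ β) (hβ1 : β < 1)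
    (xb vb gb pb : ℕ → EuclideanSpace ℝ (Fin d))
    (hv0 : vb 0 = 0)
    (hv : ∀ k, vb (k + 1) = β • vb k - α • gb k)
    (hx : ∀ k, xb (k + 1) = xb k + vb (k + 1))
    (hp0 : pb 0 = xb 0)
    (hp : ∀ k, 1 ≤ k →
      pb k = (1 / (1 - β)) • xb k - (β / (1 - β)) • xb (k - 1)) :
    ∀ K, 1 ≤ K →
      ∑ k ∈ Finset.Icc 1 K, ‖pb k - xb k‖ ^ 2
        ≤ (α ^ 2 * β ^ 2 / (1 - β) ^ 4) * ∑ k ∈ Finset.range K, ‖gb k‖ ^ 2 := by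
  have hne : (1 : ℝ) - β ≠ 0 := by linarith
  have hpos : (0 : ℝ) < 1 - β := by linarith
  -- p̄_{k+1} - x̄_{k+1} = (β/(1-β)) • v̄_{k+1}
  have key : ∀ k : ℕ, pb (k + 1) - xb (k + 1) = (β / (1 - β)) • vb (k + 1) := by
    intro k
    have h1 := hp (k + 1) (by omega)
    simp only [Nat.add_sub_cancel] at h1
    rw [h1, hx k]
    match_scalars <;> field_simp <;> ring
  -- squared norm identity
  have keysq : ∀ k : ℕ, ‖pb (k + 1) - xb (k + 1)‖ ^ 2
      = (β / (1 - β)) ^ 2 * ‖vb (k + 1)‖ ^ 2 := by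
    intro k
    rw [key k, norm_smul]
    have : |β / (1 - β)| = β / (1 - β) := abs_of_nonneg (by positivity)
    rw [Real.norm_eq_abs, this]
    ring
  -- one-step bound
  have step : ∀ k : ℕ, ‖vb (k + 1)‖ ^ 2
      ≤ β * ‖vb k‖ ^ 2 + (α ^ 2 / (1 - β)) * ‖gb k‖ ^ 2 := by
    intro k
    have htri : ‖vb (k + 1)‖ ≤ β * ‖vb k‖ + |α| * ‖gb k‖ := by
      rw [hv k]
      calc ‖β • vb k - α • gb k‖ ≤ ‖β • vb k‖ + ‖α • gb k‖ := norm_sub_le _ _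
        _ = β * ‖vb k‖ + |α| * ‖gb k‖ := by
            rw [norm_smul, norm_smul, Real.norm_eq_abs, Real.norm_eq_abs,
              abs_of_nonneg hβ0]
    have hv1 : (0:ℝ) ≤ ‖vb (k+1)‖ := norm_nonneg _
    have hv2 : (0:ℝ) ≤ ‖vb k‖ := norm_nonneg _
    have hg : (0:ℝ) ≤ ‖gb k‖ := norm_nonneg _
    have habs : (0:ℝ) ≤ |α| := abs_nonneg _
    have hsq : ‖vb (k + 1)‖ ^ 2 ≤ (β * ‖vb k‖ + |α| * ‖gb k‖) ^ 2 := by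
      nlinarith
    have hα : |α| ^ 2 = α ^ 2 := sq_abs α
    rw [div_mul_eq_mul_div, ← sub_le_iff_le_add', le_div_iff₀ hpos]
    nlinarith [mul_nonneg hβ0 (sq_nonneg ((1 - β) * ‖vb k‖ - |α| * ‖gb k‖))]
  -- sums
  set S : ℕ → ℝ := fun K => ∑ k ∈ Finset.range K, ‖vb (k + 1)‖ ^ 2 with hS
  set G : ℕ → ℝ := fun K => ∑ k ∈ Finset.range K, ‖gb k‖ ^ 2 with hG
  have hTS : ∀ K : ℕ, ∑ k ∈ Finset.range K, ‖vb k‖ ^ 2 ≤ S K := by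
    intro K
    have h1 : ∑ k ∈ Finset.range K, ‖vb k‖ ^ 2
        ≤ ∑ k ∈ Finset.range (K + 1), ‖vb k‖ ^ 2 := by
      rw [Finset.sum_range_succ]
      nlinarith [sq_nonneg ‖vb K‖]
    have h2 : ∑ k ∈ Finset.range (K + 1), ‖vb k‖ ^ 2 = S K := by
      rw [Finset.sum_range_succ']
      simp [hv0, hS]
    linarith
  have hSbound : ∀ K : ℕ, S K ≤ (α ^ 2 / (1 - β) ^ 2) * G K := by
    intro K
    have h1 : S K ≤ β * (∑ k ∈ Finset.range K, ‖vb k‖ ^ 2)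
        + (α ^ 2 / (1 - β)) * G K := by
      have := Finset.sum_le_sum (fun k (_ : k ∈ Finset.range K) => step k)
      simpa [hS, hG, Finset.mul_sum, Finset.sum_add_distrib] using this
    have h2 : S K ≤ β * S K + (α ^ 2 / (1 - β)) * G K := by
      have := hTS K
      nlinarith
    have h3 : (1 - β) * S K ≤ (α ^ 2 / (1 - β)) * G K := by linarith
    rw [div_mul_eq_mul_div, le_div_iff₀ (by positivity)]
    rw [div_mul_eq_mul_div, le_div_iff₀ hpos] at h3
    nlinarith
  intro K hK
  -- reindex the Icc sum
  have hre : ∑ k ∈ Finset.Icc 1 K, ‖pb k - xb k‖ ^ 2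
      = ∑ k ∈ Finset.range K, ‖pb (k + 1) - xb (k + 1)‖ ^ 2 := by
    rw [← Finset.Ico_add_one_right_eq_Icc, Finset.sum_Ico_eq_sum_range]
    simp [add_comm 1]
  rw [hre]
  have : ∑ k ∈ Finset.range K, ‖pb (k + 1) - xb (k + 1)‖ ^ 2
      = (β / (1 - β)) ^ 2 * S K := by
    rw [hS, Finset.mul_sum]
    exact Finset.sum_congr rfl fun k _ => keysq k
  rw [this]
  have hGnn : 0 ≤ G K := Finset.sum_nonneg fun k _ => sq_nonneg _
  have := hSbound K
  have heq : (β / (1 - β)) ^ 2 * (α ^ 2 / (1 - β) ^ 2)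
      = α ^ 2 * β ^ 2 / (1 - β) ^ 4 := by
    field_simp
  calc (β / (1 - β)) ^ 2 * S K
      ≤ (β / (1 - β)) ^ 2 * ((α ^ 2 / (1 - β) ^ 2) * G K) := by
        apply mul_le_mul_of_nonneg_left this (by positivity)
    _ = (α ^ 2 * β ^ 2 / (1 - β) ^ 4) * G K := by rw [← heq]; ring
end

section
/- Let n ≥ 1 and c₁, …, c_n ∈ ℝ; for r ∈ ℝ define h_i(r) = max{c_i, r} and h̄(r) = (1/n)∑_{i=1}^n h_i(r), and write c̄ = (1/n)∑_{i=1}^n c_i. Then: (i) the total dispersion ∑_{i=1}^n |h_i(r) − h̄(r)| is non-increasing in the truncation level r, i.e., for all r ≤ r' one has ∑_{i=1}^n |h_i(r') − h̄(r')| ≤ ∑_{i=1}^n |h_i(r) − h̄(r)|; and (ii) whenever r ≤ min_{i} c_i, one has ∑_{i=1}^n |h_i(r) − h̄(r)| = ∑_{i=1}^n |c_i − c̄|. -/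
/-- Key lemma: if pairwise gaps of `y` (in the relevant direction) are dominated by
those of `x`, then the total absolute deviation of `y` is at most that of `x`. -/
lemma dispersion_key {n : ℕ} (hn : 1 ≤ n) (x y : Fin n → ℝ)
    (hxy : ∀ i j, y j < y i → y i - y j ≤ x i - x j) :
    ∑ i, |y i - (n : ℝ)⁻¹ * ∑ k, y k| ≤ ∑ i, |x i - (n : ℝ)⁻¹ * ∑ k, x k| := by
  have hn0 : (0 : ℝ) < (n : ℝ) := by exact_mod_cast hn
  set m : ℝ := (n : ℝ)⁻¹ * ∑ k, x k with hm
  set m' : ℝ := (n : ℝ)⁻¹ * ∑ k, y k with hm'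
  set A : Finset (Fin n) := Finset.univ.filter (fun i => m' ≤ y i) with hA
  set B : Finset (Fin n) := Finset.univ.filter (fun i => ¬ m' ≤ y i) with hB
  have hsplit : ∀ f : Fin n → ℝ, ∑ i ∈ A, f i + ∑ i ∈ B, f i = ∑ i, f i := by
    intro f
    exact Finset.sum_filter_add_sum_filter_not _ _ _
  have hy0 : ∑ i, (y i - m') = 0 := by
    rw [Finset.sum_sub_distrib, Finset.sum_const, Finset.card_univ, Fintype.card_fin,
      nsmul_eq_mul, hm']
    field_simp
    ring
  have hx0 : ∑ i, (x i - m) = 0 := by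
    rw [Finset.sum_sub_distrib, Finset.sum_const, Finset.card_univ, Fintype.card_fin,
      nsmul_eq_mul, hm]
    field_simp
    ring
  -- Step 1: ∑ |y i - m'| = 2 * ∑_{i∈A} (y i - m')
  have hstep1 : ∑ i, |y i - m'| = 2 * ∑ i ∈ A, (y i - m') := by
    have hAB : ∑ i ∈ A, (y i - m') + ∑ i ∈ B, (y i - m') = 0 := by
      rw [hsplit]; exact hy0
    have h1 : ∑ i ∈ A, |y i - m'| = ∑ i ∈ A, (y i - m') := by
      apply Finset.sum_congr rfl
      intro i hi
      rw [hA, Finset.mem_filter] at hi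
      exact abs_of_nonneg (by linarith [hi.2])
    have h2 : ∑ i ∈ B, |y i - m'| = -∑ i ∈ B, (y i - m') := by
      rw [← Finset.sum_neg_distrib]
      apply Finset.sum_congr rfl
      intro i hi
      rw [hB, Finset.mem_filter] at hi
      have : y i < m' := lt_of_not_ge hi.2
      rw [abs_of_nonpos (by linarith)]
    calc ∑ i, |y i - m'| = ∑ i ∈ A, |y i - m'| + ∑ i ∈ B, |y i - m'| := (hsplit _).symm
      _ = ∑ i ∈ A, (y i - m') - ∑ i ∈ B, (y i - m') := by rw [h1, h2]; ring
      _ = 2 * ∑ i ∈ A, (y i - m') := by linarith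
  -- Step 2: ∑_{i∈A} (y i - m') ≤ ∑_{i∈A} (x i - m)
  have hstep2 : ∑ i ∈ A, (y i - m') ≤ ∑ i ∈ A, (x i - m) := by
    have hexp : ∀ z : Fin n → ℝ, (n : ℝ) * ∑ i ∈ A, (z i - (n : ℝ)⁻¹ * ∑ k, z k)
        = ∑ i ∈ A, ∑ k, (z i - z k) := by
      intro z
      rw [Finset.mul_sum]
      apply Finset.sum_congr rfl
      intro i _
      rw [Finset.sum_sub_distrib, Finset.sum_const, Finset.card_univ, Fintype.card_fin,
        nsmul_eq_mul]
      field_simp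
    have hanti : ∀ z : Fin n → ℝ, ∑ i ∈ A, ∑ k ∈ A, (z i - z k) = 0 := by
      intro z
      simp only [Finset.sum_sub_distrib, Finset.sum_const, nsmul_eq_mul]
      rw [← Finset.mul_sum]
      ring
    have hinner : ∀ z : Fin n → ℝ, ∑ i ∈ A, ∑ k, (z i - z k)
        = ∑ i ∈ A, ∑ k ∈ B, (z i - z k) := by
      intro z
      have : ∀ i, ∑ k, (z i - z k) = ∑ k ∈ A, (z i - z k) + ∑ k ∈ B, (z i - z k) :=
        fun i => (hsplit _).symm
      simp_rw [this, Finset.sum_add_distrib, hanti z, zero_add]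
    have hcmp : ∑ i ∈ A, ∑ k ∈ B, (y i - y k) ≤ ∑ i ∈ A, ∑ k ∈ B, (x i - x k) := by
      apply Finset.sum_le_sum
      intro i hi
      apply Finset.sum_le_sum
      intro k hk
      rw [hA, Finset.mem_filter] at hi
      rw [hB, Finset.mem_filter] at hk
      exact hxy i k (lt_of_lt_of_le (lt_of_not_ge hk.2) hi.2)
    have hy' := hexp y
    have hx' := hexp x
    rw [hinner y] at hy'
    rw [hinner x] at hx'
    have : (n : ℝ) * ∑ i ∈ A, (y i - m') ≤ (n : ℝ) * ∑ i ∈ A, (x i - m) := by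
      rw [hm', hm, hy', hx']; exact hcmp
    exact le_of_mul_le_mul_left this hn0
  -- Step 3: 2 * ∑_{i∈A} (x i - m) ≤ ∑ |x i - m|
  have hstep3 : 2 * ∑ i ∈ A, (x i - m) ≤ ∑ i, |x i - m| := by
    have hAB : ∑ i ∈ A, (x i - m) + ∑ i ∈ B, (x i - m) = 0 := by
      rw [hsplit]; exact hx0
    have h1 : ∑ i ∈ A, (x i - m) ≤ ∑ i ∈ A, |x i - m| :=
      Finset.sum_le_sum fun i _ => le_abs_self _
    have h2 : -∑ i ∈ B, (x i - m) ≤ ∑ i ∈ B, |x i - m| := by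
      rw [← Finset.sum_neg_distrib]
      exact Finset.sum_le_sum fun i _ => neg_le_abs _
    have := hsplit (fun i => |x i - m|)
    linarith
  linarith

/-- For reals `c₁, …, c_n` and truncations `h_i(r) = max {c_i, r}`
with average `h̄(r)`: (i) the total dispersion `∑ |h_i(r) − h̄(r)|` is non-increasing in
the truncation level `r`, and (ii) if `r ≤ min_i c_i`, then
`∑ |h_i(r) − h̄(r)| = ∑ |c_i − c̄|`. -/
theorem truncation_dispersion
    {n : ℕ} (hn : 1 ≤ n) (c : Fin n → ℝ) :
    (∀ r r' : ℝ, r ≤ r' →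
      ∑ i, |max (c i) r' - (n : ℝ)⁻¹ * ∑ j, max (c j) r'|
        ≤ ∑ i, |max (c i) r - (n : ℝ)⁻¹ * ∑ j, max (c j) r|) ∧
    (∀ r : ℝ, (∀ i, r ≤ c i) →
      ∑ i, |max (c i) r - (n : ℝ)⁻¹ * ∑ j, max (c j) r|
        = ∑ i, |c i - (n : ℝ)⁻¹ * ∑ j, c j|) := by
  constructor
  · intro r r' hrr'
    apply dispersion_key hn
    intro i j hij
    have hr'j : r' ≤ max (c j) r' := le_max_right _ _
    have hci : r' < c i := by
      rcases max_cases (c i) r' with ⟨h1, h2⟩ | ⟨h1, h2⟩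
      · by_contra h
        push_neg at h
        have : c i = r' := le_antisymm h h2
        rw [h1, this] at hij
        linarith
      · rw [h1] at hij; linarith
    have hyi : max (c i) r' = c i := max_eq_left hci.le
    have hxi : max (c i) r = c i := max_eq_left (le_trans hrr' hci.le)
    have hxj : max (c j) r ≤ max (c j) r' := max_le_max le_rfl hrr'
    rw [hyi, hxi]
    linarith
  · intro r hr
    have h : ∀ i, max (c i) r = c i := fun i => max_eq_left (hr i)
    simp_rw [h]
end
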